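/- Let r and r₀ be real numbers with r ≥ 1/2 and r₀ ≤ r + 1/2. Define G : ℕ³ → [0, ∞) by G(k, k₁, k₂) = χ[|k−k₂| ≤ 10]·((k₁+1)·2^{−r k₁} + max((k₁+1)·2^{k(1/2−2r) + k₁(r−1/2)}, 2^{(r₀−1/2−r)k₁})) + χ[|k−k₁| ≤ 10]·((k₂+1)·2^{−r k₂} + max((k₂+1)·2^{k(1/2−2r) + k₂(r−1/2)}, 2^{(r₀−1/2−r)k₂})) + χ[|k₁−k₂| ≤ 10]·((k+1)·2^{−r k} + max(2^{k₁(1/2−2r) + k(r−1/2)}, 2^{(r₀−r−1/2)k})), where χ[·] denotes the indicator of the stated condition. Then G satisfies property (G). -/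

import Mathlib

noncomputable section

open scoped ENNReal

/-- The condition that the two largest entries of the triple `(k, k₁, k₂)` differ
by at most 10 (i.e. `max ≤ med + 10`). -/
def nearMax (k k₁ k₂ : ℕ) : Prop :=
  max k (max k₁ k₂) ≤ (k + k₁ + k₂ - max k (max k₁ k₂) - min k (min k₁ k₂)) + 10

instance : ∀ k k₁ k₂, Decidable (nearMax k k₁ k₂) := fun _ _ _ => Nat.decLe _ _

/-- Property (G): the trilinear summation bound for a weight `G : ℕ³ → [0,∞)`,
restricted to triples whose two largest entries differ by at most 10.
The sum is taken in `ℝ≥0∞` so that it is always well defined. -/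
def propertyG (G : ℕ → ℕ → ℕ → ℝ) : Prop :=
  ∃ C : ℝ, ∀ a b c : ℕ → ℝ,
    (∀ n, 0 ≤ a n) → (∀ n, 0 ≤ b n) → (∀ n, 0 ≤ c n) →
    Summable (fun n => (a n) ^ 2) → Summable (fun n => (b n) ^ 2) →
    Summable (fun n => (c n) ^ 2) →
    (∑' p : ℕ × ℕ × ℕ,
        if nearMax p.1 p.2.1 p.2.2 then
          ENNReal.ofReal (G p.1 p.2.1 p.2.2 * a p.1 * b p.2.1 * c p.2.2 /
            ((min p.1 (min p.2.1 p.2.2) : ℝ) + 1) ^ 10)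
        else 0) ≤
      ENNReal.ofReal (C * Real.sqrt (∑' n, (a n) ^ 2) * Real.sqrt (∑' n, (b n) ^ 2) *
        Real.sqrt (∑' n, (c n) ^ 2))

/-- The weight from Proposition 4.2 (estimates for dyadic pieces, part 1). -/
def Gwt (r r₀ : ℝ) (k k₁ k₂ : ℕ) : ℝ :=
  (if |(k : ℤ) - (k₂ : ℤ)| ≤ 10 then
      ((k₁ : ℝ) + 1) * (2 : ℝ) ^ (-r * (k₁ : ℝ)) +
        max (((k₁ : ℝ) + 1) * (2 : ℝ) ^ ((k : ℝ) * (1 / 2 - 2 * r) + (k₁ : ℝ) * (r - 1 / 2)))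
          ((2 : ℝ) ^ ((r₀ - 1 / 2 - r) * (k₁ : ℝ)))
    else 0) +
  (if |(k : ℤ) - (k₁ : ℤ)| ≤ 10 then
      ((k₂ : ℝ) + 1) * (2 : ℝ) ^ (-r * (k₂ : ℝ)) +
        max (((k₂ : ℝ) + 1) * (2 : ℝ) ^ ((k : ℝ) * (1 / 2 - 2 * r) + (k₂ : ℝ) * (r - 1 / 2)))
          ((2 : ℝ) ^ ((r₀ - 1 / 2 - r) * (k₂ : ℝ)))
    else 0) +
  (if |(k₁ : ℤ) - (k₂ : ℤ)| ≤ 10 then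
      ((k : ℝ) + 1) * (2 : ℝ) ^ (-r * (k : ℝ)) +
        max ((2 : ℝ) ^ ((k₁ : ℝ) * (1 / 2 - 2 * r) + (k : ℝ) * (r - 1 / 2)))
          ((2 : ℝ) ^ ((r₀ - r - 1 / 2) * (k : ℝ)))
    else 0)

/-! ### Auxiliary lemmas -/

namespace Stmt17Aux

open MeasureTheory

/-- Cauchy–Schwarz for `ℝ≥0∞`-valued sums. -/
lemma cs_ennreal (f g : ℕ → ℝ≥0∞) :
    ∑' n, f n * g n ≤ (∑' n, f n ^ 2) ^ (1/2 : ℝ) * (∑' n, g n ^ 2) ^ (1/2 : ℝ) := by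
  have hconj : Real.HolderConjugate 2 2 := Real.HolderConjugate.two_two
  have h := ENNReal.lintegral_mul_le_Lp_mul_Lq (Measure.count (α := ℕ)) hconj
    (f := f) (g := g) (Measurable.aemeasurable (by exact measurable_of_countable f))
    (Measurable.aemeasurable (by exact measurable_of_countable g))
  rw [lintegral_count, lintegral_count, lintegral_count] at h
  have e2 : ∀ x : ℝ≥0∞, x ^ (2:ℝ) = x ^ 2 := fun x => by
    rw [← ENNReal.rpow_natCast x 2]; norm_num
  simp only [Pi.mul_apply, e2] at h
  exact h

lemma sq_sum_comp_le (g : ℕ → ℝ≥0∞) (d : ℕ) :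
    (∑' n, g (n + d) ^ 2) ^ (1/2 : ℝ) ≤ (∑' n, g n ^ 2) ^ (1/2 : ℝ) := by
  refine ENNReal.rpow_le_rpow ?_ (by norm_num)
  exact ENNReal.tsum_comp_le_tsum_of_injective (add_left_injective d) (fun n => g n ^ 2)

lemma shift_sum (f g : ℕ → ℝ≥0∞) :
    ∑' p : ℕ × ℕ, (if |(p.1:ℤ) - (p.2:ℤ)| ≤ 10 then f p.1 * g p.2 else 0) ≤
      22 * ((∑' n, f n ^ 2) ^ (1/2:ℝ) * (∑' n, g n ^ 2) ^ (1/2:ℝ)) := by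
  set F := (∑' n, f n ^ 2) ^ (1/2:ℝ) with hF
  set G := (∑' n, g n ^ 2) ^ (1/2:ℝ) with hG
  have hpt : ∀ p : ℕ × ℕ, (if |(p.1:ℤ) - (p.2:ℤ)| ≤ 10 then f p.1 * g p.2 else 0) ≤
      ∑ d ∈ Finset.range 11, ((if p.2 = p.1 + d then f p.1 * g p.2 else 0) +
        (if p.1 = p.2 + d then f p.1 * g p.2 else 0)) := by
    intro ⟨j, j'⟩
    by_cases hc : |(j:ℤ) - (j':ℤ)| ≤ 10
    · simp only [hc, if_true]
      rw [abs_le] at hc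
      rcases le_total j j' with h | h
      · refine le_trans ?_ (Finset.single_le_sum
          (f := fun d => (if j' = j + d then f j * g j' else 0) +
            (if j = j' + d then f j * g j' else 0)) (fun _ _ => zero_le)
          (Finset.mem_range.2 (show j' - j < 11 by omega)))
        show f j * g j' ≤ (if j' = j + (j' - j) then f j * g j' else 0) +
            (if j = j' + (j' - j) then f j * g j' else 0)
        rw [if_pos (show j' = j + (j' - j) by omega)]
        exact le_self_add
      · refine le_trans ?_ (Finset.single_le_sum
          (f := fun d => (if j' = j + d then f j * g j' else 0) +
            (if j = j' + d then f j * g j' else 0)) (fun _ _ => zero_le)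
          (Finset.mem_range.2 (show j - j' < 11 by omega)))
        show f j * g j' ≤ (if j' = j + (j - j') then f j * g j' else 0) +
            (if j = j' + (j - j') then f j * g j' else 0)
        rw [if_pos (show j = j' + (j - j') by omega)]
        exact le_add_self
    · simp [hc]
  refine le_trans (ENNReal.tsum_le_tsum hpt) ?_
  rw [Summable.tsum_finsetSum (fun i _ => ENNReal.summable)]
  have h1 : ∀ d : ℕ, ∑' p : ℕ × ℕ, (if p.2 = p.1 + d then f p.1 * g p.2 else 0) ≤ F * G := by
    intro d
    have e : ∑' p : ℕ × ℕ, (if p.2 = p.1 + d then f p.1 * g p.2 else 0)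
        = ∑' (j : ℕ) (j' : ℕ), (if j' = j + d then f j * g j' else 0) :=
      ENNReal.tsum_prod (f := fun j j' => if j' = j + d then f j * g j' else 0)
    rw [e]
    have e2 : ∀ j : ℕ, ∑' j' : ℕ, (if j' = j + d then f j * g j' else 0) = f j * g (j + d) := by
      intro j
      exact (tsum_eq_single (j + d) (fun b hb => by rw [if_neg hb])).trans (if_pos rfl)
    simp only [e2]
    exact le_trans (cs_ennreal f (fun n => g (n + d))) (mul_le_mul_right (sq_sum_comp_le g d) F)
  have h2 : ∀ d : ℕ, ∑' p : ℕ × ℕ, (if p.1 = p.2 + d then f p.1 * g p.2 else 0) ≤ F * G := by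
    intro d
    have e : ∑' p : ℕ × ℕ, (if p.1 = p.2 + d then f p.1 * g p.2 else 0)
        = ∑' (j : ℕ) (j' : ℕ), (if j = j' + d then f j * g j' else 0) :=
      ENNReal.tsum_prod (f := fun j j' => if j = j' + d then f j * g j' else 0)
    rw [e, ENNReal.tsum_comm]
    have e2 : ∀ j' : ℕ, ∑' j : ℕ, (if j = j' + d then f j * g j' else 0) = f (j' + d) * g j' := by
      intro j'
      exact (tsum_eq_single (j' + d) (fun b hb => by rw [if_neg hb])).trans (if_pos rfl)
    simp only [e2]
    refine le_trans (cs_ennreal (fun n => f (n + d)) g) ?_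
    exact mul_le_mul_left (sq_sum_comp_le f d) G
  calc ∑ d ∈ Finset.range 11, ∑' p : ℕ × ℕ, ((if p.2 = p.1 + d then f p.1 * g p.2 else 0) +
        (if p.1 = p.2 + d then f p.1 * g p.2 else 0))
      ≤ ∑ d ∈ Finset.range 11, (F * G + F * G) := by
        refine Finset.sum_le_sum (fun d _ => ?_)
        rw [ENNReal.tsum_add]
        exact add_le_add (h1 d) (h2 d)
    _ = 22 * (F * G) := by
        rw [Finset.sum_const, Finset.card_range, ← two_mul, nsmul_eq_mul, ← mul_assoc]
        norm_num

/-- The polynomial weight in `ℝ≥0∞`. -/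
def W (k : ℕ) : ℝ≥0∞ := ENNReal.ofReal (1 / ((k:ℝ) + 1) ^ 10)

lemma basel_finset (s : Finset ℕ) : ∑ k ∈ s, 1 / ((k:ℝ) + 1) ^ 2 ≤ 2 := by
  classical
  obtain ⟨n, hn⟩ : ∃ n, s ⊆ Finset.range n := ⟨s.sup id + 1, fun x hx =>
    Finset.mem_range.2 (Nat.lt_succ_of_le (Finset.le_sup (f := id) hx))⟩
  refine le_trans (Finset.sum_le_sum_of_subset_of_nonneg hn (fun i _ _ => by positivity)) ?_
  have key : ∀ n : ℕ, ∑ k ∈ Finset.range n, 1 / ((k:ℝ) + 1) ^ 2 ≤ 2 - 2 / ((n:ℝ) + 1) := by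
    intro n
    induction n with
    | zero => simp
    | succ m ih =>
      rw [Finset.sum_range_succ]
      have h1 : (0:ℝ) < (m:ℝ) + 1 := by positivity
      have h2 : (0:ℝ) < (m:ℝ) + 2 := by positivity
      have : 1 / ((m:ℝ) + 1) ^ 2 ≤ 2 / ((m:ℝ) + 1) - 2 / ((m:ℝ) + 2) := by
        rw [div_sub_div _ _ (ne_of_gt h1) (ne_of_gt h2),
          div_le_div_iff₀ (by positivity) (by positivity)]
        ring_nf
        nlinarith
      push_cast
      rw [show ((m:ℝ)+1+1) = (m:ℝ)+2 by ring]
      linarith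
  refine le_trans (key n) ?_
  have : (0:ℝ) ≤ 2 / ((n:ℝ) + 1) := by positivity
  linarith

lemma wsq_sum_le : ∑' k, W k ^ 2 ≤ 2 := by
  have h1 : ∀ k : ℕ, W k ^ 2 ≤ ENNReal.ofReal (1 / ((k:ℝ) + 1) ^ 2) := by
    intro k
    rw [W, ← ENNReal.ofReal_pow (by positivity)]
    refine ENNReal.ofReal_le_ofReal ?_
    rw [div_pow, one_pow, ← pow_mul]
    refine one_div_le_one_div_of_le (by positivity) ?_
    refine pow_le_pow_right₀ ?_ (by norm_num)
    have : (0:ℝ) ≤ (k:ℝ) := Nat.cast_nonneg k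
    linarith
  refine le_trans (ENNReal.tsum_le_tsum h1) ?_
  rw [ENNReal.tsum_eq_iSup_sum]
  refine iSup_le (fun s => ?_)
  calc ∑ k ∈ s, ENNReal.ofReal (1 / ((k:ℝ) + 1) ^ 2)
      = ENNReal.ofReal (∑ k ∈ s, 1 / ((k:ℝ) + 1) ^ 2) := by
        rw [ENNReal.ofReal_sum_of_nonneg (fun i _ => by positivity)]
    _ ≤ ENNReal.ofReal 2 := ENNReal.ofReal_le_ofReal (basel_finset s)
    _ = 2 := by norm_num

lemma wf_sum_le (f : ℕ → ℝ≥0∞) : ∑' k, W k * f k ≤ 2 * (∑' n, f n ^ 2) ^ (1/2:ℝ) := by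
  refine le_trans (cs_ennreal W f) (mul_le_mul_left ?_ _)
  calc (∑' k, W k ^ 2) ^ (1/2:ℝ) ≤ (2:ℝ≥0∞) ^ (1/2:ℝ) :=
        ENNReal.rpow_le_rpow wsq_sum_le (by norm_num)
    _ ≤ (2:ℝ≥0∞) ^ (1:ℝ) := ENNReal.rpow_le_rpow_of_exponent_le one_le_two (by norm_num)
    _ = 2 := ENNReal.rpow_one 2

set_option maxHeartbeats 1000000 in
lemma key_sum (f g h : ℕ → ℝ≥0∞) :
    ∑' p : ℕ × ℕ × ℕ, (if |(p.2.1:ℤ) - (p.2.2:ℤ)| ≤ 10 then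
        W p.1 * f p.1 * g p.2.1 * h p.2.2 else 0) ≤
      44 * ((∑' n, f n ^ 2) ^ (1/2:ℝ) *
        ((∑' n, g n ^ 2) ^ (1/2:ℝ) * (∑' n, h n ^ 2) ^ (1/2:ℝ))) := by
  have e : ∑' p : ℕ × ℕ × ℕ, (if |(p.2.1:ℤ) - (p.2.2:ℤ)| ≤ 10 then
        W p.1 * f p.1 * g p.2.1 * h p.2.2 else 0)
      = ∑' (k : ℕ) (q : ℕ × ℕ), (if |(q.1:ℤ) - (q.2:ℤ)| ≤ 10 then
        W k * f k * g q.1 * h q.2 else 0) :=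
    ENNReal.tsum_prod (f := fun (k : ℕ) (q : ℕ × ℕ) => if |(q.1:ℤ) - (q.2:ℤ)| ≤ 10 then
        W k * f k * g q.1 * h q.2 else 0)
  rw [e]
  have e2 : ∀ k : ℕ, ∑' q : ℕ × ℕ, (if |(q.1:ℤ) - (q.2:ℤ)| ≤ 10 then
        W k * f k * g q.1 * h q.2 else 0)
      = (W k * f k) * ∑' q : ℕ × ℕ, (if |(q.1:ℤ) - (q.2:ℤ)| ≤ 10 then g q.1 * h q.2 else 0) := by
    intro k
    rw [← ENNReal.tsum_mul_left]
    congr 1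
    ext q
    by_cases hc : |(q.1:ℤ) - (q.2:ℤ)| ≤ 10 <;> simp [hc, mul_assoc]
  simp only [e2]
  rw [ENNReal.tsum_mul_right]
  calc (∑' k, W k * f k) * ∑' q : ℕ × ℕ, (if |(q.1:ℤ) - (q.2:ℤ)| ≤ 10 then g q.1 * h q.2 else 0)
      ≤ (2 * (∑' n, f n ^ 2) ^ (1/2:ℝ)) *
        (22 * ((∑' n, g n ^ 2) ^ (1/2:ℝ) * (∑' n, h n ^ 2) ^ (1/2:ℝ))) :=
        mul_le_mul' (wf_sum_le f) (shift_sum g h)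
    _ = 44 * ((∑' n, f n ^ 2) ^ (1/2:ℝ) *
        ((∑' n, g n ^ 2) ^ (1/2:ℝ) * (∑' n, h n ^ 2) ^ (1/2:ℝ))) := by ring

lemma base21 (n : ℕ) : ((n:ℝ) + 21) * (2:ℝ) ^ (-(n:ℝ)/2) ≤ 21 := by
  set s : ℝ := (2:ℝ) ^ ((1:ℝ)/2) with hs
  have hs0 : 0 ≤ s := Real.rpow_nonneg (by norm_num) _
  have hs2 : s ^ 2 = 2 := by
    rw [hs, ← Real.rpow_natCast ((2:ℝ) ^ ((1:ℝ)/2)) 2, ← Real.rpow_mul (by norm_num)]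
    norm_num
  have hs14 : (1.4:ℝ) ≤ s := by nlinarith
  have hpow : (2:ℝ) ^ ((n:ℝ)/2) = s ^ n := by
    rw [show (n:ℝ)/2 = (1/2) * (n:ℝ) by ring, Real.rpow_mul (by norm_num), Real.rpow_natCast]
  have hbern : 1 + (n:ℝ) * 0.4 ≤ (1.4:ℝ) ^ n := by
    have := one_add_mul_le_pow (a := (0.4:ℝ)) (by norm_num) n
    refine le_of_le_of_eq this ?_
    norm_num
  have hsn : (1.4:ℝ) ^ n ≤ s ^ n := pow_le_pow_left₀ (by norm_num) hs14 n
  have hkey : (n:ℝ) + 21 ≤ 21 * (2:ℝ) ^ ((n:ℝ)/2) := by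
    rw [hpow]; nlinarith
  have hpos : (0:ℝ) < (2:ℝ) ^ ((n:ℝ)/2) := Real.rpow_pos_of_pos (by norm_num) _
  have hneg : (2:ℝ) ^ (-(n:ℝ)/2) = ((2:ℝ) ^ ((n:ℝ)/2))⁻¹ := by
    rw [show -(n:ℝ)/2 = -((n:ℝ)/2) by ring, Real.rpow_neg (by norm_num)]
  rw [hneg, mul_inv_le_iff₀ hpos]
  linarith

lemma piece_le {r : ℝ} (hr : 0 ≤ r) {n m : ℕ} (hnm : (m:ℝ) + 1 ≤ (n:ℝ) + 21) {e : ℝ}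
    (he : e ≤ -(n:ℝ)/2 + 20*r) : ((m:ℝ) + 1) * (2:ℝ) ^ e ≤ 21 * (2:ℝ) ^ (20*r) := by
  have h1 : ((m:ℝ) + 1) * (2:ℝ) ^ e ≤ ((n:ℝ) + 21) * (2:ℝ) ^ (-(n:ℝ)/2 + 20*r) := by
    refine mul_le_mul hnm (Real.rpow_le_rpow_of_exponent_le (by norm_num) he)
      (Real.rpow_nonneg (by norm_num) _) (by positivity)
  refine h1.trans ?_
  rw [Real.rpow_add (by norm_num), ← mul_assoc]
  exact mul_le_mul_of_nonneg_right (base21 n) (Real.rpow_nonneg (by norm_num) _)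

lemma branch_le {r r₀ : ℝ} (hr : 1/2 ≤ r) (hr₀ : r₀ ≤ r + 1/2) {kk m : ℕ}
    (hm : (m:ℕ) ≤ kk + 20) :
    ((m:ℝ) + 1) * (2:ℝ) ^ (-r * (m:ℝ)) +
      max (((m:ℝ) + 1) * (2:ℝ) ^ ((kk:ℝ) * (1/2 - 2*r) + (m:ℝ) * (r - 1/2)))
        ((2:ℝ) ^ ((r₀ - 1/2 - r) * (m:ℝ))) ≤ 42 * (2:ℝ) ^ (20*r) := by
  have hr0 : (0:ℝ) ≤ r := by linarith
  have hm' : (m:ℝ) ≤ (kk:ℝ) + 20 := by exact_mod_cast hm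
  have p1 : ((m:ℝ) + 1) * (2:ℝ) ^ (-r * (m:ℝ)) ≤ 21 * (2:ℝ) ^ (20*r) := by
    refine piece_le hr0 (n := m) (by linarith) ?_
    have : -r * (m:ℝ) ≤ -(m:ℝ)/2 := by nlinarith [Nat.cast_nonneg (α := ℝ) m]
    linarith [mul_nonneg (by norm_num : (0:ℝ) ≤ 20) hr0]
  have p2 : ((m:ℝ) + 1) * (2:ℝ) ^ ((kk:ℝ) * (1/2 - 2*r) + (m:ℝ) * (r - 1/2)) ≤
      21 * (2:ℝ) ^ (20*r) := by
    refine piece_le hr0 (n := kk) (by linarith) ?_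
    have h2 : (m:ℝ) * (r - 1/2) ≤ ((kk:ℝ) + 20) * (r - 1/2) :=
      mul_le_mul_of_nonneg_right hm' (by linarith)
    nlinarith [Nat.cast_nonneg (α := ℝ) kk]
  have p3 : (2:ℝ) ^ ((r₀ - 1/2 - r) * (m:ℝ)) ≤ 21 * (2:ℝ) ^ (20*r) := by
    have h1 : (2:ℝ) ^ ((r₀ - 1/2 - r) * (m:ℝ)) ≤ 1 := by
      refine Real.rpow_le_one_of_one_le_of_nonpos (by norm_num) ?_
      exact mul_nonpos_of_nonpos_of_nonneg (by linarith) (Nat.cast_nonneg m)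
    have h2 : (1:ℝ) ≤ (2:ℝ) ^ (20*r) := Real.one_le_rpow (by norm_num) (by linarith)
    linarith
  have := max_le p2 p3
  linarith

lemma branch3_le {r r₀ : ℝ} (hr : 1/2 ≤ r) (hr₀ : r₀ ≤ r + 1/2) {k k₁ : ℕ}
    (hk : k ≤ k₁ + 20) :
    ((k:ℝ) + 1) * (2:ℝ) ^ (-r * (k:ℝ)) +
      max ((2:ℝ) ^ ((k₁:ℝ) * (1/2 - 2*r) + (k:ℝ) * (r - 1/2)))
        ((2:ℝ) ^ ((r₀ - r - 1/2) * (k:ℝ))) ≤ 42 * (2:ℝ) ^ (20*r) := by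
  have hr0 : (0:ℝ) ≤ r := by linarith
  have hk' : (k:ℝ) ≤ (k₁:ℝ) + 20 := by exact_mod_cast hk
  have p1 : ((k:ℝ) + 1) * (2:ℝ) ^ (-r * (k:ℝ)) ≤ 21 * (2:ℝ) ^ (20*r) := by
    refine piece_le hr0 (n := k) (by linarith) ?_
    have : -r * (k:ℝ) ≤ -(k:ℝ)/2 := by nlinarith [Nat.cast_nonneg (α := ℝ) k]
    linarith [mul_nonneg (by norm_num : (0:ℝ) ≤ 20) hr0]
  have p2 : (2:ℝ) ^ ((k₁:ℝ) * (1/2 - 2*r) + (k:ℝ) * (r - 1/2)) ≤ 21 * (2:ℝ) ^ (20*r) := by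
    have := piece_le hr0 (n := k₁) (m := 0)
      (by norm_num; linarith [Nat.cast_nonneg (α := ℝ) k₁])
      (e := (k₁:ℝ) * (1/2 - 2*r) + (k:ℝ) * (r - 1/2)) ?_
    · simpa using this
    · have h2 : (k:ℝ) * (r - 1/2) ≤ ((k₁:ℝ) + 20) * (r - 1/2) :=
        mul_le_mul_of_nonneg_right hk' (by linarith)
      nlinarith [Nat.cast_nonneg (α := ℝ) k₁]
  have p3 : (2:ℝ) ^ ((r₀ - r - 1/2) * (k:ℝ)) ≤ 21 * (2:ℝ) ^ (20*r) := by
    have h1 : (2:ℝ) ^ ((r₀ - r - 1/2) * (k:ℝ)) ≤ 1 := by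
      refine Real.rpow_le_one_of_one_le_of_nonpos (by norm_num) ?_
      exact mul_nonpos_of_nonpos_of_nonneg (by linarith) (Nat.cast_nonneg k)
    have h2 : (1:ℝ) ≤ (2:ℝ) ^ (20*r) := Real.one_le_rpow (by norm_num) (by linarith)
    linarith
  have := max_le p2 p3
  linarith

lemma gwt_nonneg (r r₀ : ℝ) (k k₁ k₂ : ℕ) : 0 ≤ Gwt r r₀ k k₁ k₂ := by
  unfold Gwt
  have h : ∀ x : ℝ, (0:ℝ) ≤ (2:ℝ) ^ x := fun x => Real.rpow_nonneg (by norm_num) x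
  split_ifs <;> positivity

lemma nearMax_cases {k k₁ k₂ : ℕ} (h : nearMax k k₁ k₂) :
    (min k (min k₁ k₂) = k ∧ |(k₁:ℤ) - (k₂:ℤ)| ≤ 10) ∨
    (min k (min k₁ k₂) = k₁ ∧ |(k:ℤ) - (k₂:ℤ)| ≤ 10) ∨
    (min k (min k₁ k₂) = k₂ ∧ |(k:ℤ) - (k₁:ℤ)| ≤ 10) := by
  unfold nearMax at h
  simp only [abs_le]
  omega

lemma gwt_le {r r₀ : ℝ} (hr : 1/2 ≤ r) (hr₀ : r₀ ≤ r + 1/2) {k k₁ k₂ : ℕ}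
    (h : nearMax k k₁ k₂) : Gwt r r₀ k k₁ k₂ ≤ 126 * (2:ℝ) ^ (20*r) := by
  have hpos : (0:ℝ) ≤ 42 * (2:ℝ) ^ (20*r) := by positivity
  unfold nearMax at h
  unfold Gwt
  have b1 : (if |(k : ℤ) - (k₂ : ℤ)| ≤ 10 then
      ((k₁ : ℝ) + 1) * (2 : ℝ) ^ (-r * (k₁ : ℝ)) +
        max (((k₁ : ℝ) + 1) * (2 : ℝ) ^ ((k : ℝ) * (1 / 2 - 2 * r) + (k₁ : ℝ) * (r - 1 / 2)))
          ((2 : ℝ) ^ ((r₀ - 1 / 2 - r) * (k₁ : ℝ)))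
    else 0) ≤ 42 * (2:ℝ) ^ (20*r) := by
    split_ifs with hc
    · rw [abs_le] at hc
      exact branch_le hr hr₀ (kk := k) (m := k₁) (by omega)
    · exact hpos
  have b2 : (if |(k : ℤ) - (k₁ : ℤ)| ≤ 10 then
      ((k₂ : ℝ) + 1) * (2 : ℝ) ^ (-r * (k₂ : ℝ)) +
        max (((k₂ : ℝ) + 1) * (2 : ℝ) ^ ((k : ℝ) * (1 / 2 - 2 * r) + (k₂ : ℝ) * (r - 1 / 2)))
          ((2 : ℝ) ^ ((r₀ - 1 / 2 - r) * (k₂ : ℝ)))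
    else 0) ≤ 42 * (2:ℝ) ^ (20*r) := by
    split_ifs with hc
    · rw [abs_le] at hc
      exact branch_le hr hr₀ (kk := k) (m := k₂) (by omega)
    · exact hpos
  have b3 : (if |(k₁ : ℤ) - (k₂ : ℤ)| ≤ 10 then
      ((k : ℝ) + 1) * (2 : ℝ) ^ (-r * (k : ℝ)) +
        max ((2 : ℝ) ^ ((k₁ : ℝ) * (1 / 2 - 2 * r) + (k : ℝ) * (r - 1 / 2)))
          ((2 : ℝ) ^ ((r₀ - r - 1 / 2) * (k : ℝ)))
    else 0) ≤ 42 * (2:ℝ) ^ (20*r) := by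
    split_ifs with hc
    · rw [abs_le] at hc
      exact branch3_le hr hr₀ (k := k) (k₁ := k₁) (by omega)
    · exact hpos
  linarith

end Stmt17Aux

open Stmt17Aux in
theorem stmt17 (r r₀ : ℝ) (hr : 1 / 2 ≤ r) (hr₀ : r₀ ≤ r + 1 / 2) :
    propertyG (Gwt r r₀) := by
  set C₀ : ℝ := 126 * (2:ℝ) ^ (20*r) with hC₀
  have hC₀0 : 0 ≤ C₀ := by positivity
  refine ⟨132 * C₀, fun a b c ha hb hc ha2 hb2 hc2 => ?_⟩
  set A : ℕ → ℝ≥0∞ := fun n => ENNReal.ofReal (a n) with hA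
  set B : ℕ → ℝ≥0∞ := fun n => ENNReal.ofReal (b n) with hB
  set Cf : ℕ → ℝ≥0∞ := fun n => ENNReal.ofReal (c n) with hCf
  set T1 : ℕ × ℕ × ℕ → ℝ≥0∞ := fun p =>
    if |(p.2.1:ℤ) - (p.2.2:ℤ)| ≤ 10 then W p.1 * A p.1 * B p.2.1 * Cf p.2.2 else 0 with hT1
  set T2 : ℕ × ℕ × ℕ → ℝ≥0∞ := fun p =>
    if |(p.1:ℤ) - (p.2.2:ℤ)| ≤ 10 then W p.2.1 * B p.2.1 * A p.1 * Cf p.2.2 else 0 with hT2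
  set T3 : ℕ × ℕ × ℕ → ℝ≥0∞ := fun p =>
    if |(p.1:ℤ) - (p.2.1:ℤ)| ≤ 10 then W p.2.2 * Cf p.2.2 * A p.1 * B p.2.1 else 0 with hT3
  -- pointwise estimate
  have hpoint : ∀ p : ℕ × ℕ × ℕ,
      (if nearMax p.1 p.2.1 p.2.2 then
          ENNReal.ofReal (Gwt r r₀ p.1 p.2.1 p.2.2 * a p.1 * b p.2.1 * c p.2.2 /
            ((min p.1 (min p.2.1 p.2.2) : ℝ) + 1) ^ 10)
        else 0) ≤ ENNReal.ofReal C₀ * (T1 p + T2 p + T3 p) := by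
    rintro ⟨k, k₁, k₂⟩
    by_cases hn : nearMax k k₁ k₂
    · simp only [hn, if_true]
      have hsplit : ENNReal.ofReal (Gwt r r₀ k k₁ k₂ * a k * b k₁ * c k₂ /
            ((min k (min k₁ k₂) : ℝ) + 1) ^ 10)
          = ENNReal.ofReal (Gwt r r₀ k k₁ k₂) * A k * B k₁ * Cf k₂ * W (min k (min k₁ k₂)) := by
        rw [div_eq_mul_one_div, W]
        rw [ENNReal.ofReal_mul (mul_nonneg (mul_nonneg (mul_nonneg
          (gwt_nonneg r r₀ k k₁ k₂) (ha k)) (hb k₁)) (hc k₂))]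
        rw [ENNReal.ofReal_mul (mul_nonneg (mul_nonneg
          (gwt_nonneg r r₀ k k₁ k₂) (ha k)) (hb k₁))]
        rw [ENNReal.ofReal_mul (mul_nonneg (gwt_nonneg r r₀ k k₁ k₂) (ha k))]
        rw [ENNReal.ofReal_mul (gwt_nonneg r r₀ k k₁ k₂)]
        simp [Nat.cast_min]
        rfl
      rw [hsplit]
      have hG : ENNReal.ofReal (Gwt r r₀ k k₁ k₂) ≤ ENNReal.ofReal C₀ :=
        ENNReal.ofReal_le_ofReal (gwt_le hr hr₀ hn)
      calc ENNReal.ofReal (Gwt r r₀ k k₁ k₂) * A k * B k₁ * Cf k₂ * W (min k (min k₁ k₂))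
          ≤ ENNReal.ofReal C₀ * A k * B k₁ * Cf k₂ * W (min k (min k₁ k₂)) := by gcongr
        _ ≤ ENNReal.ofReal C₀ * (T1 (k, k₁, k₂) + T2 (k, k₁, k₂) + T3 (k, k₁, k₂)) := by
            rw [mul_assoc, mul_assoc, mul_assoc]
            refine mul_le_mul_right ?_ _
            rcases nearMax_cases hn with ⟨hm, hcond⟩ | ⟨hm, hcond⟩ | ⟨hm, hcond⟩
            · rw [hm]
              have : A k * (B k₁ * (Cf k₂ * W k)) = T1 (k, k₁, k₂) := by
                rw [hT1]; simp only [if_pos hcond]; ring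
              rw [this]
              exact le_trans le_self_add le_self_add
            · rw [hm]
              have : A k * (B k₁ * (Cf k₂ * W k₁)) = T2 (k, k₁, k₂) := by
                rw [hT2]; simp only [if_pos hcond]; ring
              rw [this]
              exact le_trans le_add_self le_self_add
            · rw [hm]
              have : A k * (B k₁ * (Cf k₂ * W k₂)) = T3 (k, k₁, k₂) := by
                rw [hT3]; simp only [if_pos hcond]; ring
              rw [this]
              exact le_add_self
    · simp [hn]
  refine le_trans (ENNReal.tsum_le_tsum hpoint) ?_
  rw [ENNReal.tsum_mul_left]
  set Fa := (∑' n, A n ^ 2) ^ (1/2:ℝ) with hFa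
  set Fb := (∑' n, B n ^ 2) ^ (1/2:ℝ) with hFb
  set Fc := (∑' n, Cf n ^ 2) ^ (1/2:ℝ) with hFc
  have hS1 : ∑' p : ℕ × ℕ × ℕ, T1 p ≤ 44 * (Fa * (Fb * Fc)) := key_sum A B Cf
  have hS2 : ∑' p : ℕ × ℕ × ℕ, T2 p ≤ 44 * (Fb * (Fa * Fc)) := by
    have e : ∑' p : ℕ × ℕ × ℕ, T2 p = ∑' p : ℕ × ℕ × ℕ,
        (if |(p.2.1:ℤ) - (p.2.2:ℤ)| ≤ 10 then W p.1 * B p.1 * A p.2.1 * Cf p.2.2 else 0) :=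
      Equiv.tsum_eq (⟨fun p => (p.2.1, p.1, p.2.2), fun p => (p.2.1, p.1, p.2.2),
        fun p => rfl, fun p => rfl⟩ : ℕ × ℕ × ℕ ≃ ℕ × ℕ × ℕ)
        (fun p : ℕ × ℕ × ℕ =>
          if |(p.2.1:ℤ) - (p.2.2:ℤ)| ≤ 10 then W p.1 * B p.1 * A p.2.1 * Cf p.2.2 else 0)
    rw [e]
    exact key_sum B A Cf
  have hS3 : ∑' p : ℕ × ℕ × ℕ, T3 p ≤ 44 * (Fc * (Fa * Fb)) := by
    have e : ∑' p : ℕ × ℕ × ℕ, T3 p = ∑' p : ℕ × ℕ × ℕ,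
        (if |(p.2.1:ℤ) - (p.2.2:ℤ)| ≤ 10 then W p.1 * Cf p.1 * A p.2.1 * B p.2.2 else 0) :=
      Equiv.tsum_eq (⟨fun p => (p.2.2, p.1, p.2.1), fun p => (p.2.1, p.2.2, p.1),
        fun p => rfl, fun p => rfl⟩ : ℕ × ℕ × ℕ ≃ ℕ × ℕ × ℕ)
        (fun p : ℕ × ℕ × ℕ =>
          if |(p.2.1:ℤ) - (p.2.2:ℤ)| ≤ 10 then W p.1 * Cf p.1 * A p.2.1 * B p.2.2 else 0)
    rw [e]
    exact key_sum Cf A B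
  have hsum : ∑' p : ℕ × ℕ × ℕ, (T1 p + T2 p + T3 p) ≤ 132 * (Fa * (Fb * Fc)) := by
    rw [ENNReal.tsum_add, ENNReal.tsum_add]
    calc (∑' p, T1 p) + (∑' p, T2 p) + (∑' p, T3 p)
        ≤ 44 * (Fa * (Fb * Fc)) + 44 * (Fb * (Fa * Fc)) + 44 * (Fc * (Fa * Fb)) :=
          add_le_add (add_le_add hS1 hS2) hS3
      _ = 132 * (Fa * (Fb * Fc)) := by ring
  refine le_trans (mul_le_mul_right hsum _) ?_
  -- convert Fa, Fb, Fc to ofReal of sqrt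
  have conv : ∀ (f : ℕ → ℝ), (∀ n, 0 ≤ f n) → Summable (fun n => f n ^ 2) →
      (∑' n, (ENNReal.ofReal (f n)) ^ 2) ^ (1/2:ℝ) =
        ENNReal.ofReal (Real.sqrt (∑' n, f n ^ 2)) := by
    intro f hf hf2
    have h1 : ∑' n, (ENNReal.ofReal (f n)) ^ 2 = ENNReal.ofReal (∑' n, f n ^ 2) := by
      rw [ENNReal.ofReal_tsum_of_nonneg (fun n => sq_nonneg _) hf2]
      exact tsum_congr (fun n => (ENNReal.ofReal_pow (hf n) 2).symm)
    rw [h1, ENNReal.ofReal_rpow_of_nonneg (tsum_nonneg (fun n => sq_nonneg _)) (by norm_num)]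
    rw [Real.sqrt_eq_rpow]
  have hFa' : Fa = ENNReal.ofReal (Real.sqrt (∑' n, a n ^ 2)) := conv a ha ha2
  have hFb' : Fb = ENNReal.ofReal (Real.sqrt (∑' n, b n ^ 2)) := conv b hb hb2
  have hFc' : Fc = ENNReal.ofReal (Real.sqrt (∑' n, c n ^ 2)) := conv c hc hc2
  rw [hFa', hFb', hFc']
  rw [← ENNReal.ofReal_mul (Real.sqrt_nonneg _), ← ENNReal.ofReal_mul (Real.sqrt_nonneg _)]
  rw [show (132:ℝ≥0∞) = ENNReal.ofReal 132 by norm_num]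
  rw [← ENNReal.ofReal_mul (by norm_num : (0:ℝ) ≤ 132), ← ENNReal.ofReal_mul hC₀0]
  exact ENNReal.ofReal_le_ofReal (le_of_eq (by ring))
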